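/- Let s be a sign assignment on a toroidal grid diagram. For any generator x, any domain D in D(x,x) of Maslov index two that is a vertical annulus V_i decomposes uniquely as a sum of two rectangles R_x ∈ R(x,x') and R'_x ∈ R(x',x). Define v_{s,x}(i) = s(R_x)·s(R'_x). Then v_{s,x}(i) = v_{s,y}(i) for all generators x,y and all i; that is, the vertical function of a sign assignment is independent of the generator. The analogous statement holds for horizontal annuli and the horizontal function h_{s,x}. -/

import Mathlib

open Equiv

/-- Membership in the half-open cyclic interval `[a, b)` in `ZMod N`. -/
def InIco {N : ℕ} (a b t : ZMod N) : Prop := (t - a).val < (b - a).val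

instance {N : ℕ} (a b t : ZMod N) : Decidable (InIco a b t) := by
  unfold InIco; infer_instance

/-- A (geometric) rectangle in the toroidal grid diagram of index `N`:
it spans the cyclic row interval `[r1, r2)` and the cyclic column interval
`[c1, c2)`, with bottom-left corner `(r1, c1)` and top-right corner `(r2, c2)`. -/
structure GridRect (N : ℕ) where
  r1 : ZMod N
  r2 : ZMod N
  c1 : ZMod N
  c2 : ZMod N
  hr : r1 ≠ r2
  hc : c1 ≠ c2

/-- The coefficient of the rectangle, viewed as a 2-chain, at the elementary
domain whose bottom-left corner is `p = (row, column)`. -/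
def GridRect.coeff {N : ℕ} (R : GridRect N) (p : ZMod N × ZMod N) : ℕ :=
  if InIco R.r1 R.r2 p.1 ∧ InIco R.c1 R.c2 p.2 then 1 else 0

/-- `R` is a rectangle joining the generator `x` to the generator `y`;
generators are recorded as permutations, the generator `x` having coordinates
`(r, x r)` for `r : ZMod N`.  The bottom-left and top-right corners of `R` are
coordinates of `x`, the other two corners are coordinates of `y`, the
remaining `N - 2` coordinates are shared, and the interior of `R` contains no
coordinate of `x` (equivalently, of `y`). -/
def Connects {N : ℕ} (R : GridRect N) (x y : Equiv.Perm (ZMod N)) : Prop :=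
  x R.r1 = R.c1 ∧ x R.r2 = R.c2 ∧ y R.r1 = R.c2 ∧ y R.r2 = R.c1 ∧
  (∀ r, r ≠ R.r1 → r ≠ R.r2 → x r = y r) ∧
  (∀ r, InIco R.r1 R.r2 r → r ≠ R.r1 → ¬(InIco R.c1 R.c2 (x r) ∧ x r ≠ R.c1))

/-- A sign assignment: `s x R` is the sign (±1) of the rectangle `R` regarded
as a rectangle with initial generator `x`.  Whenever a Maslov index two domain
with four distinct generators involved admits two different decompositions as
sums of two rectangles, the two sign products are opposite. -/
def IsSignAssignment {N : ℕ} (s : Equiv.Perm (ZMod N) → GridRect N → ℤ) : Prop :=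
  (∀ x R, s x R = 1 ∨ s x R = -1) ∧
  ∀ (x y z z' : Equiv.Perm (ZMod N)) (R1 R2 R1' R2' : GridRect N),
    x ≠ y → x ≠ z → x ≠ z' → y ≠ z → y ≠ z' → z ≠ z' →
    Connects R1 x z → Connects R2 z y → Connects R1' x z' → Connects R2' z' y →
    (∀ p, R1.coeff p + R2.coeff p = R1'.coeff p + R2'.coeff p) →
    s x R1 * s z R2 = -(s x R1' * s z' R2')

/-- `(x', R, R')` is a decomposition of the vertical annulus `V c` (the column
of elementary domains `(·, c)`) as a sum of two rectangles based at the
generator `x`. -/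
def IsVertDecomp {N : ℕ} (c : ZMod N) (x x' : Equiv.Perm (ZMod N))
    (R R' : GridRect N) : Prop :=
  Connects R x x' ∧ Connects R' x' x ∧
  ∀ p : ZMod N × ZMod N, R.coeff p + R'.coeff p = if p.2 = c then 1 else 0

/-- `(x', R, R')` is a decomposition of the horizontal annulus `H r` as a sum
of two rectangles based at the generator `x`. -/
def IsHorizDecomp {N : ℕ} (r : ZMod N) (x x' : Equiv.Perm (ZMod N))
    (R R' : GridRect N) : Prop :=
  Connects R x x' ∧ Connects R' x' x ∧
  ∀ p : ZMod N × ZMod N, R.coeff p + R'.coeff p = if p.1 = r then 1 else 0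

/-- Gauge equivalence of sign assignments. -/
def GaugeEquiv {N : ℕ} (s1 s2 : Equiv.Perm (ZMod N) → GridRect N → ℤ) : Prop :=
  ∃ t : Equiv.Perm (ZMod N) → ℤ, (∀ x, t x = 1 ∨ t x = -1) ∧
    ∀ x y R, Connects R x y → s1 x R = t x * t y * s2 x R


set_option linter.unusedSectionVars false

theorem Equiv.Perm.apply_inv_self {α : Type*} (f : Equiv.Perm α) (x : α) : f (f⁻¹ x) = x :=
  f.apply_symm_apply x

theorem Equiv.Perm.inv_apply_self {α : Type*} (f : Equiv.Perm α) (x : α) : f⁻¹ (f x) = x :=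
  f.symm_apply_apply x

namespace Scratch
variable {N : ℕ} [NeZero N]

lemma val_inj {a b : ZMod N} : a = b ↔ a.val = b.val :=
  ⟨congrArg _, fun h => ZMod.val_injective N h⟩

lemma sub_val (a b : ZMod N) :
    (a - b).val = if b.val ≤ a.val then a.val - b.val else a.val + N - b.val := by
  rcases eq_or_ne b 0 with rfl | hb
  · simp [ZMod.val_lt a]
  · rw [sub_eq_add_neg, ZMod.val_add, ZMod.neg_val, if_neg hb]
    have ha := ZMod.val_lt a
    have hb' := ZMod.val_lt b
    have hbpos : 0 < b.val := ZMod.val_pos.2 hb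
    rcases le_or_gt b.val a.val with h | h
    · rw [if_pos h, ← Nat.add_sub_assoc (le_of_lt hb'), Nat.add_comm,
        Nat.add_sub_assoc h, Nat.add_mod_left, Nat.mod_eq_of_lt (by omega)]
    · rw [if_neg (not_le.2 h), Nat.mod_eq_of_lt (by omega)]; omega

lemma inIco_iff {a b t : ZMod N} :
    InIco a b t ↔ ((a.val ≤ b.val ∧ a.val ≤ t.val ∧ t.val < b.val) ∨
      (b.val < a.val ∧ (a.val ≤ t.val ∨ t.val < b.val))) := by
  have h1 := ZMod.val_lt a; have h2 := ZMod.val_lt b; have h3 := ZMod.val_lt t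
  unfold InIco; rw [sub_val, sub_val]
  split_ifs <;> omega

lemma val_add_one' (hN : 2 ≤ N) (c : ZMod N) :
    ((c+1).val = c.val + 1 ∧ c.val + 1 < N) ∨ ((c+1).val = 0 ∧ c.val + 1 = N) := by
  haveI : Fact (1 < N) := ⟨hN⟩
  have := ZMod.val_lt c
  rw [ZMod.val_add, ZMod.val_one]
  rcases eq_or_ne (c.val + 1) N with h | h
  · right; refine ⟨?_, h⟩; rw [h, Nat.mod_self]
  · left; rw [Nat.mod_eq_of_lt (by omega)]; omega

lemma self_ne_add_one (hN : 2 ≤ N) (c : ZMod N) : c ≠ c + 1 := by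
  rw [Ne, val_inj]
  rcases val_add_one' hN c with ⟨h, _⟩ | ⟨h, h2⟩ <;> omega

lemma inIco_succ_iff (hN : 2 ≤ N) {c t : ZMod N} : InIco c (c+1) t ↔ t = c := by
  rw [inIco_iff, val_inj]
  have h3 := ZMod.val_lt t
  rcases val_add_one' hN c with ⟨h, h2⟩ | ⟨h, h2⟩ <;> omega

lemma inIco_left {a b : ZMod N} (h : a ≠ b) : InIco a b a := by
  have : a.val ≠ b.val := val_inj.not.1 h
  rw [inIco_iff]; omega

lemma indicator_split {a b d : ZMod N} (h : InIco a d b) (t : ZMod N) :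
    (if InIco a d t then (1:ℕ) else 0) =
      (if InIco a b t then 1 else 0) + (if InIco b d t then 1 else 0) := by
  have h1 := ZMod.val_lt a; have h2 := ZMod.val_lt b; have h3 := ZMod.val_lt d
  have h4 := ZMod.val_lt t
  rw [inIco_iff] at h
  simp only [inIco_iff]
  split_ifs <;> omega

lemma indicator_compl {a b : ZMod N} (h : a ≠ b) (t : ZMod N) :
    (if InIco a b t then (1:ℕ) else 0) + (if InIco b a t then 1 else 0) = 1 := by
  have h1 := ZMod.val_lt a; have h2 := ZMod.val_lt b; have h4 := ZMod.val_lt t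
  have h5 : a.val ≠ b.val := val_inj.not.1 h
  simp only [inIco_iff]
  split_ifs <;> omega

end Scratch

namespace Scratch2
open Scratch
variable {N : ℕ} [NeZero N]

lemma gridRect_ext {R S : GridRect N} (h1 : R.r1 = S.r1) (h2 : R.r2 = S.r2)
    (h3 : R.c1 = S.c1) (h4 : R.c2 = S.c2) : R = S := by
  cases R; cases S; simp_all

lemma coeff_eq (R : GridRect N) (p : ZMod N × ZMod N) :
    R.coeff p = (if InIco R.r1 R.r2 p.1 then (1:ℕ) else 0) *
      (if InIco R.c1 R.c2 p.2 then 1 else 0) := by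
  unfold GridRect.coeff
  by_cases h1 : InIco R.r1 R.r2 p.1 <;> by_cases h2 : InIco R.c1 R.c2 p.2 <;>
    simp [h1, h2]

def partner (c : ZMod N) (x : Equiv.Perm (ZMod N)) : Equiv.Perm (ZMod N) :=
  x * Equiv.swap (x⁻¹ c) (x⁻¹ (c+1))

lemma inv_ne (hN : 2 ≤ N) (c : ZMod N) (x : Equiv.Perm (ZMod N)) :
    x⁻¹ c ≠ x⁻¹ (c+1) := fun h => self_ne_add_one hN c (x⁻¹.injective h)

lemma partner_apply_left (c : ZMod N) (x : Equiv.Perm (ZMod N)) :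
    partner c x (x⁻¹ c) = c + 1 := by
  simp [partner, Equiv.swap_apply_left]

lemma partner_apply_right (c : ZMod N) (x : Equiv.Perm (ZMod N)) :
    partner c x (x⁻¹ (c+1)) = c := by
  simp [partner, Equiv.swap_apply_right]

lemma partner_apply_ne {c : ZMod N} {x : Equiv.Perm (ZMod N)} {r : ZMod N}
    (h0 : r ≠ x⁻¹ c) (h1 : r ≠ x⁻¹ (c+1)) : partner c x r = x r := by
  rw [partner, Equiv.Perm.mul_apply, Equiv.swap_apply_of_ne_of_ne h0 h1]

lemma partner_inv_c (c : ZMod N) (x : Equiv.Perm (ZMod N)) :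
    (partner c x)⁻¹ c = x⁻¹ (c+1) :=
  (Equiv.Perm.inv_eq_iff_eq).2 (partner_apply_right c x).symm

lemma partner_inv_c1 (c : ZMod N) (x : Equiv.Perm (ZMod N)) :
    (partner c x)⁻¹ (c+1) = x⁻¹ c :=
  (Equiv.Perm.inv_eq_iff_eq).2 (partner_apply_left c x).symm

lemma partner_inv_ne {c v : ZMod N} (x : Equiv.Perm (ZMod N))
    (h0 : v ≠ c) (h1 : v ≠ c+1) : (partner c x)⁻¹ v = x⁻¹ v :=
  (Equiv.Perm.inv_eq_iff_eq).2 (by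
    rw [partner_apply_ne (fun h => h0 (by simpa using congrArg x h))
      (fun h => h1 (by simpa using congrArg x h))]
    simp)

def vR (hN : 2 ≤ N) (c : ZMod N) (x : Equiv.Perm (ZMod N)) : GridRect N :=
  ⟨x⁻¹ c, x⁻¹ (c+1), c, c+1, inv_ne hN c x, self_ne_add_one hN c⟩

def vR' (hN : 2 ≤ N) (c : ZMod N) (x : Equiv.Perm (ZMod N)) : GridRect N :=
  ⟨x⁻¹ (c+1), x⁻¹ c, c, c+1, (inv_ne hN c x).symm, self_ne_add_one hN c⟩

@[simp] lemma vR_r1 (hN : 2 ≤ N) (c : ZMod N) (x : Equiv.Perm (ZMod N)) :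
    (vR hN c x).r1 = x⁻¹ c := rfl
@[simp] lemma vR_r2 (hN : 2 ≤ N) (c : ZMod N) (x : Equiv.Perm (ZMod N)) :
    (vR hN c x).r2 = x⁻¹ (c+1) := rfl
@[simp] lemma vR_c1 (hN : 2 ≤ N) (c : ZMod N) (x : Equiv.Perm (ZMod N)) :
    (vR hN c x).c1 = c := rfl
@[simp] lemma vR_c2 (hN : 2 ≤ N) (c : ZMod N) (x : Equiv.Perm (ZMod N)) :
    (vR hN c x).c2 = c + 1 := rfl
@[simp] lemma vR'_r1 (hN : 2 ≤ N) (c : ZMod N) (x : Equiv.Perm (ZMod N)) :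
    (vR' hN c x).r1 = x⁻¹ (c+1) := rfl
@[simp] lemma vR'_r2 (hN : 2 ≤ N) (c : ZMod N) (x : Equiv.Perm (ZMod N)) :
    (vR' hN c x).r2 = x⁻¹ c := rfl
@[simp] lemma vR'_c1 (hN : 2 ≤ N) (c : ZMod N) (x : Equiv.Perm (ZMod N)) :
    (vR' hN c x).c1 = c := rfl
@[simp] lemma vR'_c2 (hN : 2 ≤ N) (c : ZMod N) (x : Equiv.Perm (ZMod N)) :
    (vR' hN c x).c2 = c + 1 := rfl

lemma connects_vR (hN : 2 ≤ N) (c : ZMod N) (x : Equiv.Perm (ZMod N)) :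
    Connects (vR hN c x) x (partner c x) := by
  refine ⟨x.apply_inv_self c, x.apply_inv_self (c+1), partner_apply_left c x,
    partner_apply_right c x, fun r h0 h1 => (partner_apply_ne h0 h1).symm,
    fun r _ _ h => ?_⟩
  exact h.2 ((inIco_succ_iff hN).1 h.1)

lemma connects_vR' (hN : 2 ≤ N) (c : ZMod N) (x : Equiv.Perm (ZMod N)) :
    Connects (vR' hN c x) (partner c x) x := by
  refine ⟨partner_apply_right c x, partner_apply_left c x,
    x.apply_inv_self (c+1), x.apply_inv_self c,
    fun r h0 h1 => partner_apply_ne h1 h0, fun r _ _ h => ?_⟩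
  exact h.2 ((inIco_succ_iff hN).1 h.1)

lemma isVertDecomp_canonical (hN : 2 ≤ N) (c : ZMod N) (x : Equiv.Perm (ZMod N)) :
    IsVertDecomp c x (partner c x) (vR hN c x) (vR' hN c x) := by
  refine ⟨connects_vR hN c x, connects_vR' hN c x, fun p => ?_⟩
  rw [coeff_eq, coeff_eq]
  rw [vR_r1, vR_r2, vR_c1, vR_c2, vR'_r1, vR'_r2, vR'_c1, vR'_c2]
  by_cases h : p.2 = c
  · rw [if_pos ((inIco_succ_iff hN).2 h), if_pos h, mul_one, mul_one,
      indicator_compl (inv_ne hN c x) p.1]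
  · rw [if_neg (fun hh => h ((inIco_succ_iff hN).1 hh)), if_neg h, mul_zero, mul_zero]
    rfl

lemma vertDecomp_unique (hN : 2 ≤ N) {c : ZMod N} {x x₁ : Equiv.Perm (ZMod N)}
    {R R' : GridRect N} (h : IsVertDecomp c x x₁ R R') :
    x₁ = partner c x ∧ R = vR hN c x ∧ R' = vR' hN c x := by
  haveI : Fact (1 < N) := ⟨hN⟩
  obtain ⟨hc1, hc2, hsum⟩ := h
  have colR : ∀ t, InIco R.c1 R.c2 t → t = c := by
    intro t ht
    have h1 := hsum (R.r1, t)
    unfold GridRect.coeff at h1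
    simp only [Prod.fst, Prod.snd] at h1
    rw [if_pos ⟨inIco_left R.hr, ht⟩] at h1
    by_contra hq
    rw [if_neg hq] at h1
    split_ifs at h1 <;> omega
  have colR' : ∀ t, InIco R'.c1 R'.c2 t → t = c := by
    intro t ht
    have h1 := hsum (R'.r1, t)
    unfold GridRect.coeff at h1
    simp only [Prod.fst, Prod.snd] at h1
    rw [if_pos (show InIco R'.r1 R'.r2 R'.r1 ∧ InIco R'.c1 R'.c2 t from
      ⟨inIco_left R'.hr, ht⟩)] at h1
    by_contra hq
    rw [if_neg hq] at h1
    split_ifs at h1 <;> omega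
  have c2eq : ∀ (S : GridRect N), S.c1 = c → (∀ t, InIco S.c1 S.c2 t → t = c) →
      S.c2 = c + 1 := by
    intro S hS1 hcol
    by_contra hne
    have h0 : S.c2 - c ≠ 0 := sub_ne_zero.2 (fun h => S.hc (hS1.trans h.symm))
    have h1 : S.c2 - c ≠ 1 := fun h => hne (by
      have := sub_eq_iff_eq_add.1 h; rwa [add_comm] at this)
    have hv0 : (S.c2 - c).val ≠ 0 := fun h => h0 (ZMod.val_injective N (by
      rw [h, ZMod.val_zero]))
    have hv1 : (S.c2 - c).val ≠ 1 := fun h => h1 (val_inj.2 (by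
      rw [h, ZMod.val_one]))
    have hin : InIco S.c1 S.c2 (c+1) := by
      rw [hS1]
      unfold InIco
      rw [add_sub_cancel_left, ZMod.val_one]
      omega
    exact self_ne_add_one hN c (hcol _ hin).symm
  have c1R : R.c1 = c := colR R.c1 (inIco_left R.hc)
  have c2R : R.c2 = c + 1 := c2eq R c1R colR
  have c1R' : R'.c1 = c := colR' R'.c1 (inIco_left R'.hc)
  have c2R' : R'.c2 = c + 1 := c2eq R' c1R' colR'
  have hr1 : R.r1 = x⁻¹ c := by
    rw [← c1R, ← hc1.1]
    exact (x.inv_apply_self R.r1).symm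
  have hr2 : R.r2 = x⁻¹ (c+1) := by
    rw [← c2R, ← hc1.2.1]
    exact (x.inv_apply_self R.r2).symm
  have hx1 : x₁ = partner c x := by
    apply Equiv.ext
    intro r
    by_cases h0 : r = x⁻¹ c
    · subst h0
      rw [partner_apply_left, ← hr1, hc1.2.2.1, c2R]
    · by_cases h1 : r = x⁻¹ (c+1)
      · subst h1
        rw [partner_apply_right, ← hr2, hc1.2.2.2.1, c1R]
      · rw [partner_apply_ne h0 h1]
        exact (hc1.2.2.2.2.1 r (fun h => h0 (by rw [h, hr1]))
          (fun h => h1 (by rw [h, hr2]))).symm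
  subst hx1
  have h5 : (partner c x) R'.r1 = c := by rw [hc2.1, c1R']
  have h6 : (partner c x) R'.r2 = c + 1 := by rw [hc2.2.1, c2R']
  have hr1' : R'.r1 = x⁻¹ (c+1) := by
    rw [← partner_inv_c c x]
    exact ((Equiv.Perm.inv_eq_iff_eq).2 h5.symm).symm
  have hr2' : R'.r2 = x⁻¹ c := by
    rw [← partner_inv_c1 c x]
    exact ((Equiv.Perm.inv_eq_iff_eq).2 h6.symm).symm
  exact ⟨rfl, gridRect_ext hr1 hr2 c1R c2R, gridRect_ext hr1' hr2' c1R' c2R'⟩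

lemma isVertDecomp_swap (hN : 2 ≤ N) (c : ZMod N) (x : Equiv.Perm (ZMod N)) :
    IsVertDecomp c (partner c x) x (vR' hN c x) (vR hN c x) :=
  ⟨(isVertDecomp_canonical hN c x).2.1, (isVertDecomp_canonical hN c x).1,
    fun p => by rw [add_comm]; exact (isVertDecomp_canonical hN c x).2.2 p⟩

lemma partner_partner (hN : 2 ≤ N) (c : ZMod N) (x : Equiv.Perm (ZMod N)) :
    partner c (partner c x) = x :=
  ((vertDecomp_unique hN (isVertDecomp_swap hN c x)).1).symm

lemma vR_partner (hN : 2 ≤ N) (c : ZMod N) (x : Equiv.Perm (ZMod N)) :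
    vR hN c (partner c x) = vR' hN c x :=
  ((vertDecomp_unique hN (isVertDecomp_swap hN c x)).2.1).symm

lemma vR'_partner (hN : 2 ≤ N) (c : ZMod N) (x : Equiv.Perm (ZMod N)) :
    vR' hN c (partner c x) = vR hN c x :=
  ((vertDecomp_unique hN (isVertDecomp_swap hN c x)).2.2).symm

def Vfun (s : Equiv.Perm (ZMod N) → GridRect N → ℤ) (hN : 2 ≤ N) (c : ZMod N)
    (x : Equiv.Perm (ZMod N)) : ℤ :=
  s x (vR hN c x) * s (partner c x) (vR' hN c x)

lemma V_partner (s : Equiv.Perm (ZMod N) → GridRect N → ℤ) (hN : 2 ≤ N)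
    (c : ZMod N) (x : Equiv.Perm (ZMod N)) :
    Vfun s hN c (partner c x) = Vfun s hN c x := by
  unfold Vfun
  rw [vR_partner hN, vR'_partner hN, partner_partner hN, mul_comm]

end Scratch2

namespace Scratch3
open Scratch Scratch2
variable {N : ℕ} [NeZero N] {s : Equiv.Perm (ZMod N) → GridRect N → ℤ}

lemma perm_ne {α : Type*} {x y : Equiv.Perm α} (r : α) (h : x r ≠ y r) : x ≠ y :=
  fun e => h (by rw [e])

lemma sign_combine {A1 A2 t u C1 C2 : ℤ} (ht : t = 1 ∨ t = -1) (hu : u = 1 ∨ u = -1)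
    (E1 : A1 * u = -(t * C1)) (E2 : A2 * t = -(u * C2)) : C1 * C2 = A1 * A2 := by
  have h1 : A1 * A2 * (u * t) = (t * C1) * (u * C2) := by
    calc A1 * A2 * (u * t) = (A1 * u) * (A2 * t) := by ring
    _ = (-(t*C1)) * (-(u*C2)) := by rw [E1, E2]
    _ = (t*C1)*(u*C2) := by ring
  rcases ht with rfl | rfl <;> rcases hu with rfl | rfl <;>
    first | linear_combination h1 | linear_combination -h1

lemma V_move_generic (hs : IsSignAssignment s) (hN : 2 ≤ N) {c a : ZMod N}
    (ha1 : a ≠ c) (ha2 : a ≠ c + 1) (ha3 : a + 1 ≠ c) (x : Equiv.Perm (ZMod N)) :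
    Vfun s hN c (partner a x) = Vfun s hN c x := by
  have ha4 : a + 1 ≠ c + 1 := fun h => ha1 (add_right_cancel h)
  have dr01 : x⁻¹ c ≠ x⁻¹ (c+1) := inv_ne hN c x
  have dp01 : x⁻¹ a ≠ x⁻¹ (a+1) := inv_ne hN a x
  have d_r0p0 : x⁻¹ c ≠ x⁻¹ a := fun h => ha1 (x⁻¹.injective h).symm
  have d_r0p1 : x⁻¹ c ≠ x⁻¹ (a+1) := fun h => ha3 (x⁻¹.injective h).symm
  have d_r1p0 : x⁻¹ (c+1) ≠ x⁻¹ a := fun h => ha2 (x⁻¹.injective h).symm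
  have d_r1p1 : x⁻¹ (c+1) ≠ x⁻¹ (a+1) := fun h => ha4 (x⁻¹.injective h).symm
  -- inverse computations
  have hx'_inv_a : (partner c x)⁻¹ a = x⁻¹ a := partner_inv_ne x ha1 ha2
  have hx'_inv_a1 : (partner c x)⁻¹ (a+1) = x⁻¹ (a+1) := partner_inv_ne x ha3 ha4
  have hy_inv_c : (partner a x)⁻¹ c = x⁻¹ c :=
    partner_inv_ne x (Ne.symm ha1) (Ne.symm ha3)
  have hy_inv_c1 : (partner a x)⁻¹ (c+1) = x⁻¹ (c+1) :=
    partner_inv_ne x (Ne.symm ha2) (Ne.symm ha4)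
  have hS : vR hN a (partner c x) = vR hN a x :=
    gridRect_ext hx'_inv_a hx'_inv_a1 rfl rfl
  have hRy : vR hN c (partner a x) = vR hN c x :=
    gridRect_ext hy_inv_c hy_inv_c1 rfl rfl
  have hRy' : vR' hN c (partner a x) = vR' hN c x :=
    gridRect_ext hy_inv_c1 hy_inv_c rfl rfl
  -- applications
  have hx'_r0 : partner c x (x⁻¹ c) = c + 1 := partner_apply_left c x
  have hx'_r1 : partner c x (x⁻¹ (c+1)) = c := partner_apply_right c x
  have hx'_p0 : partner c x (x⁻¹ a) = a := by
    rw [partner_apply_ne d_r0p0.symm d_r1p0.symm]; exact x.apply_inv_self a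
  have hy_r0 : partner a x (x⁻¹ c) = c := by
    rw [partner_apply_ne d_r0p0 d_r0p1]; exact x.apply_inv_self c
  have hy_r1 : partner a x (x⁻¹ (c+1)) = c + 1 := by
    rw [partner_apply_ne d_r1p0 d_r1p1]; exact x.apply_inv_self (c+1)
  have hy_p0 : partner a x (x⁻¹ a) = a + 1 := partner_apply_left a x
  have hw_p0 : partner a (partner c x) (x⁻¹ a) = a + 1 := by
    have h := partner_apply_left a (partner c x); rwa [hx'_inv_a] at h
  have hw_p1 : partner a (partner c x) (x⁻¹ (a+1)) = a := by
    have h := partner_apply_right a (partner c x); rwa [hx'_inv_a1] at h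
  have hw_r0 : partner a (partner c x) (x⁻¹ c) = c + 1 := by
    rw [partner_apply_ne (fun h => d_r0p0 (h.trans hx'_inv_a))
      (fun h => d_r0p1 (h.trans hx'_inv_a1))]
    exact hx'_r0
  -- the commuting of the two partner moves
  have hw : partner c (partner a x) = partner a (partner c x) := by
    apply Equiv.ext; intro r
    by_cases h0 : r = x⁻¹ c
    · subst h0
      rw [hw_r0]
      have h := partner_apply_left c (partner a x); rwa [hy_inv_c] at h
    · by_cases h1 : r = x⁻¹ (c+1)
      · subst h1
        have h := partner_apply_right c (partner a x); rw [hy_inv_c1] at h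
        rw [h, partner_apply_ne (fun hh => d_r1p0 (hh.trans hx'_inv_a))
          (fun hh => d_r1p1 (hh.trans hx'_inv_a1))]
        exact hx'_r1.symm
      · rw [partner_apply_ne (fun hh => h0 (hh.trans hy_inv_c))
          (fun hh => h1 (hh.trans hy_inv_c1))]
        by_cases h2 : r = x⁻¹ a
        · subst h2; rw [hy_p0, hw_p0]
        · by_cases h3 : r = x⁻¹ (a+1)
          · subst h3; rw [partner_apply_right a x, hw_p1]
          · rw [partner_apply_ne h2 h3, partner_apply_ne
              (fun hh => h2 (hh.trans hx'_inv_a))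
              (fun hh => h3 (hh.trans hx'_inv_a1)),
              partner_apply_ne h0 h1]
  -- Connects facts
  have C1 : Connects (vR hN c x) x (partner c x) := connects_vR hN c x
  have C2 : Connects (vR hN a x) (partner c x) (partner a (partner c x)) := by
    have h := connects_vR hN a (partner c x); rwa [hS] at h
  have C3 : Connects (vR hN a x) x (partner a x) := connects_vR hN a x
  have C4 : Connects (vR hN c x) (partner a x) (partner a (partner c x)) := by
    have h := connects_vR hN c (partner a x); rwa [hRy, hw] at h
  have C5 : Connects (vR' hN c x) (partner c x) x := connects_vR' hN c x
  have C6 : Connects (vR' hN c x) (partner a (partner c x)) (partner a x) := by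
    have h := connects_vR' hN c (partner a x); rwa [hRy', hw] at h
  -- distinctness
  have dxx' : x ≠ partner c x :=
    perm_ne (x⁻¹ c) (by rw [x.apply_inv_self, hx'_r0]; exact self_ne_add_one hN c)
  have dxy : x ≠ partner a x :=
    perm_ne (x⁻¹ a) (by rw [x.apply_inv_self, hy_p0]; exact self_ne_add_one hN a)
  have dxw : x ≠ partner a (partner c x) :=
    perm_ne (x⁻¹ a) (by rw [x.apply_inv_self, hw_p0]; exact self_ne_add_one hN a)
  have dx'y : partner c x ≠ partner a x :=
    perm_ne (x⁻¹ c) (by rw [hx'_r0, hy_r0]; exact (self_ne_add_one hN c).symm)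
  have dx'w : partner c x ≠ partner a (partner c x) :=
    perm_ne (x⁻¹ a) (by rw [hx'_p0, hw_p0]; exact self_ne_add_one hN a)
  have dyw : partner a x ≠ partner a (partner c x) :=
    perm_ne (x⁻¹ c) (by rw [hy_r0, hw_r0]; exact self_ne_add_one hN c)
  -- the two axiom applications
  have E1 := hs.2 x (partner a (partner c x)) (partner c x) (partner a x)
    (vR hN c x) (vR hN a x) (vR hN a x) (vR hN c x)
    dxw dxx' dxy (Ne.symm dx'w) (Ne.symm dyw) dx'y
    C1 C2 C3 C4 (fun p => add_comm _ _)
  have E2 := hs.2 (partner c x) (partner a x) x (partner a (partner c x))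
    (vR' hN c x) (vR hN a x) (vR hN a x) (vR' hN c x)
    dx'y (Ne.symm dxx') dx'w (Ne.symm dxy) dyw dxw
    C5 C3 C2 C6 (fun p => add_comm _ _)
  show Vfun s hN c (partner a x) = Vfun s hN c x
  unfold Vfun
  rw [hRy, hRy', hw]
  exact sign_combine (hs.1 x (vR hN a x)) (hs.1 (partner c x) (vR hN a x)) E1 E2

lemma V_move_overlap (hs : IsSignAssignment s) (hN : 2 ≤ N) {c : ZMod N}
    (x : Equiv.Perm (ZMod N))
    (hI : InIco (x⁻¹ c) (x⁻¹ (c+1+1)) (x⁻¹ (c+1))) :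
    Vfun s hN c (partner (c+1) x) = Vfun s hN c x := by
  have dr01 : x⁻¹ c ≠ x⁻¹ (c+1) := inv_ne hN c x
  have dr12 : x⁻¹ (c+1) ≠ x⁻¹ (c+1+1) := inv_ne hN (c+1) x
  have dr02 : x⁻¹ c ≠ x⁻¹ (c+1+1) := by
    intro h
    unfold InIco at hI
    rw [← h, sub_self] at hI
    simp at hI
  have d01 : c ≠ c + 1 := self_ne_add_one hN c
  have d12 : c + 1 ≠ c + 1 + 1 := self_ne_add_one hN (c+1)
  have d02 : c ≠ c + 1 + 1 := fun h => dr02 (by rw [← h])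
  have o1 := val_add_one' hN c
  have o2 := val_add_one' hN (c+1)
  have d02v : c.val ≠ (c+1+1).val := val_inj.not.1 d02
  have hIc : InIco c (c+1+1) (c+1) := by
    rw [inIco_iff]; omega
  have hmem2 : ∀ v : ZMod N, InIco c (c+1+1) v → v = c ∨ v = c + 1 := by
    intro v hv
    have hvv := ZMod.val_lt v
    rw [inIco_iff] at hv
    have : v.val = c.val ∨ v.val = (c+1).val := by omega
    rcases this with h | h
    · exact Or.inl (val_inj.2 h)
    · exact Or.inr (val_inj.2 h)
  -- interval facts on rows
  have v01 : (x⁻¹ c).val ≠ (x⁻¹ (c+1)).val := val_inj.not.1 dr01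
  have v12 : (x⁻¹ (c+1)).val ≠ (x⁻¹ (c+1+1)).val := val_inj.not.1 dr12
  have v02 : (x⁻¹ c).val ≠ (x⁻¹ (c+1+1)).val := val_inj.not.1 dr02
  have hnot_r0 : ¬ InIco (x⁻¹ (c+1)) (x⁻¹ (c+1+1)) (x⁻¹ c) := by
    rw [inIco_iff] at hI ⊢; omega
  have hIr : InIco (x⁻¹ (c+1)) (x⁻¹ c) (x⁻¹ (c+1+1)) := by
    rw [inIco_iff] at hI ⊢; omega
  -- inverse computations for y := partner (c+1) x
  have hy_inv_c : (partner (c+1) x)⁻¹ c = x⁻¹ c := partner_inv_ne x d01 d02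
  have hy_inv_c1 : (partner (c+1) x)⁻¹ (c+1) = x⁻¹ (c+1+1) := partner_inv_c (c+1) x
  -- applications
  have hx'_r0 : partner c x (x⁻¹ c) = c + 1 := partner_apply_left c x
  have hx'_r1 : partner c x (x⁻¹ (c+1)) = c := partner_apply_right c x
  have hx'_r2 : partner c x (x⁻¹ (c+1+1)) = c + 1 + 1 := by
    rw [partner_apply_ne dr02.symm dr12.symm]; exact x.apply_inv_self _
  have hy_r0 : partner (c+1) x (x⁻¹ c) = c := by
    rw [partner_apply_ne dr01 dr02]; exact x.apply_inv_self c
  have hy_r1 : partner (c+1) x (x⁻¹ (c+1)) = c + 1 + 1 := partner_apply_left (c+1) x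
  have hy_r2 : partner (c+1) x (x⁻¹ (c+1+1)) = c + 1 := partner_apply_right (c+1) x
  have hy'_r0 : partner c (partner (c+1) x) (x⁻¹ c) = c + 1 := by
    have h := partner_apply_left c (partner (c+1) x); rwa [hy_inv_c] at h
  have hy'_r2 : partner c (partner (c+1) x) (x⁻¹ (c+1+1)) = c := by
    have h := partner_apply_right c (partner (c+1) x); rwa [hy_inv_c1] at h
  have hy'_r1 : partner c (partner (c+1) x) (x⁻¹ (c+1)) = c + 1 + 1 := by
    rw [partner_apply_ne (fun h => dr01 (h.trans hy_inv_c).symm)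
      (fun h => dr12 (h.trans hy_inv_c1))]
    exact hy_r1
  -- the rectangle B
  obtain ⟨B, hBr1, hBr2, hBc1, hBc2⟩ :
      ∃ B : GridRect N, B.r1 = x⁻¹ (c+1) ∧ B.r2 = x⁻¹ (c+1+1) ∧
        B.c1 = c ∧ B.c2 = c+1+1 :=
    ⟨⟨_, _, _, _, dr12, d02⟩, rfl, rfl, rfl, rfl⟩
  have CB : Connects B (partner c x) (partner c (partner (c+1) x)) := by
    refine ⟨?_, ?_, ?_, ?_, ?_, ?_⟩
    · rw [hBr1, hBc1]; exact hx'_r1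
    · rw [hBr2, hBc2]; exact hx'_r2
    · rw [hBr1, hBc2]; exact hy'_r1
    · rw [hBr2, hBc1]; exact hy'_r2
    · intro r h1 h2
      rw [hBr1] at h1; rw [hBr2] at h2
      by_cases h0 : r = x⁻¹ c
      · subst h0; rw [hx'_r0, hy'_r0]
      · rw [partner_apply_ne h0 h1,
          partner_apply_ne (fun h => h0 (h.trans hy_inv_c))
            (fun h => h2 (h.trans hy_inv_c1)),
          partner_apply_ne h1 h2]
    · intro t htI ht1 hcon
      rw [hBr1, hBr2] at htI
      rw [hBr1] at ht1
      rw [hBc1, hBc2] at hcon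
      have hval : partner c x t = c + 1 := by
        rcases hmem2 _ hcon.1 with h | h
        · exact absurd h hcon.2
        · exact h
      have ht0 : t = x⁻¹ c := by
        have h : (partner c x)⁻¹ (c+1) = t := Equiv.Perm.inv_eq_iff_eq.2 hval.symm
        rw [partner_inv_c1] at h
        exact h.symm
      subst ht0
      exact hnot_r0 htI
  -- Connects for canonical rectangles
  have CRx : Connects (vR hN c x) x (partner c x) := connects_vR hN c x
  have CS : Connects (vR hN (c+1) x) x (partner (c+1) x) := connects_vR hN (c+1) x
  have CRy : Connects (vR hN c (partner (c+1) x)) (partner (c+1) x)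
      (partner c (partner (c+1) x)) := connects_vR hN c (partner (c+1) x)
  have CRx' : Connects (vR' hN c x) (partner c x) x := connects_vR' hN c x
  have CRy' : Connects (vR' hN c (partner (c+1) x)) (partner c (partner (c+1) x))
      (partner (c+1) x) := connects_vR' hN c (partner (c+1) x)
  -- distinctness
  have dxx' : x ≠ partner c x :=
    perm_ne (x⁻¹ c) (by rw [x.apply_inv_self, hx'_r0]; exact d01)
  have dxy : x ≠ partner (c+1) x :=
    perm_ne (x⁻¹ (c+1)) (by rw [x.apply_inv_self, hy_r1]; exact d12)
  have dxy' : x ≠ partner c (partner (c+1) x) :=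
    perm_ne (x⁻¹ (c+1+1)) (by rw [x.apply_inv_self, hy'_r2]; exact Ne.symm d02)
  have dx'y : partner c x ≠ partner (c+1) x :=
    perm_ne (x⁻¹ c) (by rw [hx'_r0, hy_r0]; exact Ne.symm d01)
  have dx'y' : partner c x ≠ partner c (partner (c+1) x) :=
    perm_ne (x⁻¹ (c+1)) (by rw [hx'_r1, hy'_r1]; exact d02)
  have dyy' : partner (c+1) x ≠ partner c (partner (c+1) x) :=
    perm_ne (x⁻¹ c) (by rw [hy_r0, hy'_r0]; exact d01)
  -- coefficient identities
  have coeff1 : ∀ p : ZMod N × ZMod N, (vR hN c x).coeff p + B.coeff p =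
      (vR hN (c+1) x).coeff p + (vR hN c (partner (c+1) x)).coeff p := by
    intro p
    rw [coeff_eq, coeff_eq, coeff_eq, coeff_eq]
    simp only [vR_r1, vR_r2, vR_c1, vR_c2]
    simp only [hBr1, hBr2, hBc1, hBc2, hy_inv_c, hy_inv_c1]
    rw [indicator_split hIc p.2, indicator_split hI p.1]
    ring
  have coeff2 : ∀ p : ZMod N × ZMod N, (vR' hN c x).coeff p + (vR hN (c+1) x).coeff p =
      B.coeff p + (vR' hN c (partner (c+1) x)).coeff p := by
    intro p
    rw [coeff_eq, coeff_eq, coeff_eq, coeff_eq]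
    simp only [vR_r1, vR_r2, vR_c1, vR_c2, vR'_r1, vR'_r2, vR'_c1, vR'_c2]
    simp only [hBr1, hBr2, hBc1, hBc2, hy_inv_c, hy_inv_c1]
    erw [indicator_split hIr p.1, indicator_split hIc p.2]
    ring
  -- the two axiom applications
  have E1 := hs.2 x (partner c (partner (c+1) x)) (partner c x) (partner (c+1) x)
    (vR hN c x) B (vR hN (c+1) x) (vR hN c (partner (c+1) x))
    dxy' dxx' dxy (Ne.symm dx'y') (Ne.symm dyy') dx'y
    CRx CB CS CRy coeff1
  have E2 := hs.2 (partner c x) (partner (c+1) x) x (partner c (partner (c+1) x))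
    (vR' hN c x) (vR hN (c+1) x) B (vR' hN c (partner (c+1) x))
    dx'y (Ne.symm dxx') dx'y' (Ne.symm dxy) dyy' dxy'
    CRx' CS CB CRy' coeff2
  show Vfun s hN c (partner (c+1) x) = Vfun s hN c x
  unfold Vfun
  exact sign_combine (hs.1 x (vR hN (c+1) x)) (hs.1 (partner c x) B) E1 E2

lemma V_move (hs : IsSignAssignment s) (hN : 2 ≤ N) (c a : ZMod N)
    (ha : a ≠ c - 1) (x : Equiv.Perm (ZMod N)) :
    Vfun s hN c (partner a x) = Vfun s hN c x := by
  by_cases h1 : a = c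
  · subst h1; exact V_partner s hN a x
  by_cases h2 : a = c + 1
  · subst h2
    have ha' : c + 1 + 1 ≠ c := fun h => ha (eq_sub_iff_add_eq.2 h)
    have dr01 : x⁻¹ c ≠ x⁻¹ (c+1) := inv_ne hN c x
    have dr12 : x⁻¹ (c+1) ≠ x⁻¹ (c+1+1) := inv_ne hN (c+1) x
    have dr02 : x⁻¹ c ≠ x⁻¹ (c+1+1) := fun h => ha' (x⁻¹.injective h).symm
    by_cases hI : InIco (x⁻¹ c) (x⁻¹ (c+1+1)) (x⁻¹ (c+1))
    · exact V_move_overlap hs hN x hI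
    · have v01 : (x⁻¹ c).val ≠ (x⁻¹ (c+1)).val := val_inj.not.1 dr01
      have v12 : (x⁻¹ (c+1)).val ≠ (x⁻¹ (c+1+1)).val := val_inj.not.1 dr12
      have v02 : (x⁻¹ c).val ≠ (x⁻¹ (c+1+1)).val := val_inj.not.1 dr02
      have hII : InIco (x⁻¹ c) (x⁻¹ (c+1)) (x⁻¹ (c+1+1)) := by
        rw [inIco_iff] at hI ⊢
        push_neg at hI
        omega
      have hIy : InIco ((partner (c+1) x)⁻¹ c) ((partner (c+1) x)⁻¹ (c+1+1))
          ((partner (c+1) x)⁻¹ (c+1)) := by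
        rw [partner_inv_ne x (self_ne_add_one hN c) (Ne.symm ha'),
          partner_inv_c1 (c+1) x, partner_inv_c (c+1) x]
        exact hII
      have h := V_move_overlap hs hN (partner (c+1) x) hIy
      rw [partner_partner hN (c+1) x] at h
      exact h.symm
  · exact V_move_generic hs hN h1 h2 (fun h => ha (eq_sub_iff_add_eq.2 h)) x

end Scratch3

namespace Scratch4
open Scratch Scratch2 Scratch3
variable {N : ℕ} [NeZero N] {s : Equiv.Perm (ZMod N) → GridRect N → ℤ}

lemma partner_eq_mul (a : ZMod N) (x : Equiv.Perm (ZMod N)) :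
    partner a x = Equiv.swap a (a+1) * x := by
  apply Equiv.ext; intro r
  rw [Equiv.Perm.mul_apply]
  by_cases h0 : r = x⁻¹ a
  · subst h0; rw [partner_apply_left, x.apply_inv_self, Equiv.swap_apply_left]
  · by_cases h1 : r = x⁻¹ (a+1)
    · subst h1; rw [partner_apply_right, x.apply_inv_self, Equiv.swap_apply_right]
    · rw [partner_apply_ne h0 h1, Equiv.swap_apply_of_ne_of_ne
        (fun h => h0 (by rw [← h, Equiv.Perm.inv_apply_self]))
        (fun h => h1 (by rw [← h, Equiv.Perm.inv_apply_self]))]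

def moveSet (c : ZMod N) : Set (Equiv.Perm (ZMod N)) :=
  {σ | ∃ a : ZMod N, a ≠ c - 1 ∧ σ = Equiv.swap a (a+1)}

lemma swap_chain_mem (hN : 2 ≤ N) (c : ZMod N) :
    ∀ j, j ≤ N - 1 → ∀ i, i < j →
      Equiv.swap (c + (i:ZMod N)) (c + (j:ZMod N)) ∈ Subgroup.closure (moveSet c) := by
  have hcast : ∀ {i j : ℕ}, i < N → j < N → (i:ZMod N) = (j:ZMod N) → i = j := by
    intro i j hi hj h
    rw [← ZMod.val_cast_of_lt hi, ← ZMod.val_cast_of_lt hj, h]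
  have hne : ∀ {i j : ℕ}, i < N → j < N → i ≠ j → c + (i:ZMod N) ≠ c + (j:ZMod N) := by
    intro i j hi hj hij h
    exact hij (hcast hi hj (add_left_cancel h))
  have hsub1 : ((N - 1 : ℕ) : ZMod N) = -1 := by
    rw [Nat.cast_sub (by omega : 1 ≤ N), ZMod.natCast_self, Nat.cast_one, zero_sub]
  have hc1 : c - 1 = c + ((N-1:ℕ) : ZMod N) := by
    rw [hsub1]; ring
  have hgen : ∀ k, k < N - 1 →
      Equiv.swap (c + (k:ZMod N)) (c + ((k+1:ℕ):ZMod N)) ∈ moveSet c := by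
    intro k hk
    refine ⟨c + (k:ZMod N), ?_, ?_⟩
    · rw [hc1]; exact hne (by omega) (by omega) (by omega)
    · have h : ((k+1:ℕ) : ZMod N) = (k : ZMod N) + 1 := by push_cast; ring
      rw [h, ← add_assoc]
  intro j
  induction j using Nat.strong_induction_on with
  | _ j IH =>
    intro hj i hi
    rcases eq_or_lt_of_le (Nat.succ_le_of_lt hi) with hji | hji
    · subst hji
      exact Subgroup.subset_closure (hgen i (by omega))
    · have hg := hgen (j-1) (by omega)
      have hj1 : ((j-1)+1 : ℕ) = j := by omega
      rw [hj1] at hg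
      have hIH := IH (j-1) (by omega) (by omega) i (by omega)
      have hxy : c + (i:ZMod N) ≠ c + ((j-1:ℕ):ZMod N) :=
        hne (by omega) (by omega) (by omega)
      have hxz : c + (i:ZMod N) ≠ c + (j:ZMod N) := hne (by omega) (by omega) (by omega)
      have heq : Equiv.swap (c + (i:ZMod N)) (c + (j:ZMod N)) =
          Equiv.swap (c + ((j-1:ℕ):ZMod N)) (c + (j:ZMod N)) *
          Equiv.swap (c + (i:ZMod N)) (c + ((j-1:ℕ):ZMod N)) *
          Equiv.swap (c + ((j-1:ℕ):ZMod N)) (c + (j:ZMod N)) := by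
        rw [Equiv.swap_mul_swap_mul_swap hxy hxz, Equiv.swap_comm]
      rw [heq]
      exact Subgroup.mul_mem _ (Subgroup.mul_mem _ (Subgroup.subset_closure hg) hIH)
        (Subgroup.subset_closure hg)

lemma swap_mem_moves (hN : 2 ≤ N) (c : ZMod N) {u v : ZMod N} (huv : u ≠ v) :
    Equiv.swap u v ∈ Subgroup.closure (moveSet c) := by
  have hu : c + (((u - c).val : ℕ) : ZMod N) = u := by
    rw [ZMod.natCast_zmod_val]; ring
  have hv : c + (((v - c).val : ℕ) : ZMod N) = v := by
    rw [ZMod.natCast_zmod_val]; ring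
  have hiu := ZMod.val_lt (u - c)
  have hiv := ZMod.val_lt (v - c)
  have hne' : (u - c).val ≠ (v - c).val := fun h => huv (by rw [← hu, ← hv, h])
  rcases lt_or_gt_of_ne hne' with h | h
  · have hm := swap_chain_mem hN c (v-c).val (by omega) (u-c).val h
    rwa [hu, hv] at hm
  · have hm := swap_chain_mem hN c (u-c).val (by omega) (v-c).val h
    rw [hu, hv] at hm
    rwa [Equiv.swap_comm] at hm

lemma moves_top (hN : 2 ≤ N) (c : ZMod N) : Subgroup.closure (moveSet c) = ⊤ := by
  rw [eq_top_iff, ← Equiv.Perm.closure_isSwap, Subgroup.closure_le]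
  rintro σ ⟨u, v, huv, rfl⟩
  exact swap_mem_moves hN c huv

lemma V_const (hs : IsSignAssignment s) (hN : 2 ≤ N) (c : ZMod N)
    (x y : Equiv.Perm (ZMod N)) : Vfun s hN c x = Vfun s hN c y := by
  have key : ∀ σ : Equiv.Perm (ZMod N), ∀ z, Vfun s hN c (σ * z) = Vfun s hN c z := by
    intro σ
    have hσ : σ ∈ Subgroup.closure (moveSet c) := by
      rw [moves_top hN c]; exact Subgroup.mem_top σ
    refine Subgroup.closure_induction ?_ ?_ ?_ ?_ hσ
    · rintro τ ⟨a, ha, rfl⟩ z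
      rw [← partner_eq_mul a z]
      exact V_move hs hN c a ha z
    · intro z; rw [one_mul]
    · intro f g _ _ hf hg z
      rw [mul_assoc, hf (g * z), hg z]
    · intro f _ hf z
      have h := hf (f⁻¹ * z)
      rw [← mul_assoc, mul_inv_cancel, one_mul] at h
      exact h.symm
  have h := key (y * x⁻¹) x
  rw [mul_assoc, inv_mul_cancel, mul_one] at h
  exact h.symm

lemma vert_products (hs : IsSignAssignment s) (hN : 2 ≤ N) {c : ZMod N}
    {x x' y y' : Equiv.Perm (ZMod N)} {Rx Rx' Ry Ry' : GridRect N}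
    (h1 : IsVertDecomp c x x' Rx Rx') (h2 : IsVertDecomp c y y' Ry Ry') :
    s x Rx * s x' Rx' = s y Ry * s y' Ry' := by
  obtain ⟨e1, e2, e3⟩ := vertDecomp_unique hN h1
  obtain ⟨f1, f2, f3⟩ := vertDecomp_unique hN h2
  subst e1; subst e2; subst e3; subst f1; subst f2; subst f3
  exact V_const hs hN c x y

lemma vert_exu (hN : 2 ≤ N) (c : ZMod N) (x : Equiv.Perm (ZMod N)) :
    ∃! d : Equiv.Perm (ZMod N) × GridRect N × GridRect N,
      IsVertDecomp c x d.1 d.2.1 d.2.2 := by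
  refine ⟨(partner c x, vR hN c x, vR' hN c x), isVertDecomp_canonical hN c x, ?_⟩
  rintro ⟨x₁, R, R'⟩ hd
  obtain ⟨e1, e2, e3⟩ := vertDecomp_unique hN hd
  subst e1; subst e2; subst e3; rfl

end Scratch4

namespace Scratch5
open Scratch Scratch2 Scratch3 Scratch4
variable {N : ℕ} [NeZero N] {s : Equiv.Perm (ZMod N) → GridRect N → ℤ}

def GridRect.T {N : ℕ} (R : GridRect N) : GridRect N :=
  ⟨R.c1, R.c2, R.r1, R.r2, R.hc, R.hr⟩

@[simp] lemma T_T (R : GridRect N) : (GridRect.T (GridRect.T R)) = R := rfl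

lemma coeff_T (R : GridRect N) (a b : ZMod N) :
    (GridRect.T R).coeff (a, b) = R.coeff (b, a) := by
  unfold GridRect.coeff GridRect.T
  by_cases h1 : InIco R.c1 R.c2 a <;> by_cases h2 : InIco R.r1 R.r2 b <;>
    simp [h1, h2]

lemma connects_T {R : GridRect N} {x y : Equiv.Perm (ZMod N)}
    (h : Connects R x y) : Connects (GridRect.T R) x⁻¹ y⁻¹ := by
  obtain ⟨h1, h2, h3, h4, h5, h6⟩ := h
  refine ⟨Equiv.Perm.inv_eq_iff_eq.2 h1.symm, Equiv.Perm.inv_eq_iff_eq.2 h2.symm,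
    Equiv.Perm.inv_eq_iff_eq.2 h4.symm, Equiv.Perm.inv_eq_iff_eq.2 h3.symm,
    ?_, ?_⟩
  · intro g hg1 hg2
    have hx : x (x⁻¹ g) = g := x.apply_inv_self g
    by_cases e1 : x⁻¹ g = R.r1
    · exact absurd (show g = R.c1 by rw [← hx, e1]; exact h1) hg1
    · by_cases e2 : x⁻¹ g = R.r2
      · exact absurd (show g = R.c2 by rw [← hx, e2]; exact h2) hg2
      · have h7 := h5 (x⁻¹ g) e1 e2
        exact (Equiv.Perm.inv_eq_iff_eq.2 (by rw [← h7]; exact hx.symm)).symm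
  · intro g hg hgne hcon
    exact h6 (x⁻¹ g) hcon.1 hcon.2
      ⟨by rw [x.apply_inv_self]; exact hg, by rw [x.apply_inv_self]; exact hgne⟩

lemma horiz_to_vert {r : ZMod N} {x z : Equiv.Perm (ZMod N)} {R R' : GridRect N}
    (h : IsHorizDecomp r x z R R') :
    IsVertDecomp r x⁻¹ z⁻¹ (GridRect.T R) (GridRect.T R') := by
  obtain ⟨h1, h2, h3⟩ := h
  refine ⟨connects_T h1, connects_T h2, fun p => ?_⟩
  rcases p with ⟨a, b⟩
  rw [coeff_T, coeff_T]
  exact h3 (b, a)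

lemma vert_to_horiz {r : ZMod N} {x z : Equiv.Perm (ZMod N)} {R R' : GridRect N}
    (h : IsVertDecomp r x z R R') :
    IsHorizDecomp r x⁻¹ z⁻¹ (GridRect.T R) (GridRect.T R') := by
  obtain ⟨h1, h2, h3⟩ := h
  refine ⟨connects_T h1, connects_T h2, fun p => ?_⟩
  rcases p with ⟨a, b⟩
  rw [coeff_T, coeff_T]
  exact h3 (b, a)

lemma sign_T (hs : IsSignAssignment s) :
    IsSignAssignment (fun (σ : Equiv.Perm (ZMod N)) (R : GridRect N) =>
      s σ⁻¹ (GridRect.T R)) := by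
  constructor
  · exact fun x R => hs.1 x⁻¹ (GridRect.T R)
  · intro x y z z' R1 R2 R1' R2' d1 d2 d3 d4 d5 d6 c1 c2 c3 c4 hco
    exact hs.2 x⁻¹ y⁻¹ z⁻¹ z'⁻¹ (GridRect.T R1) (GridRect.T R2) (GridRect.T R1')
      (GridRect.T R2')
      (fun h => d1 (inv_injective h)) (fun h => d2 (inv_injective h))
      (fun h => d3 (inv_injective h)) (fun h => d4 (inv_injective h))
      (fun h => d5 (inv_injective h)) (fun h => d6 (inv_injective h))
      (connects_T c1) (connects_T c2) (connects_T c3) (connects_T c4)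
      (fun p => by
        rcases p with ⟨a, b⟩
        rw [coeff_T, coeff_T, coeff_T, coeff_T]
        exact hco (b, a))

theorem main {N : ℕ} [NeZero N] (hN : 2 ≤ N)
    (s : Equiv.Perm (ZMod N) → GridRect N → ℤ) (hs : IsSignAssignment s) :
    (∀ (c : ZMod N) (x : Equiv.Perm (ZMod N)),
      ∃! d : Equiv.Perm (ZMod N) × GridRect N × GridRect N,
        IsVertDecomp c x d.1 d.2.1 d.2.2) ∧
    (∀ (r : ZMod N) (x : Equiv.Perm (ZMod N)),
      ∃! d : Equiv.Perm (ZMod N) × GridRect N × GridRect N,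
        IsHorizDecomp r x d.1 d.2.1 d.2.2) ∧
    (∀ (c : ZMod N) (x x' y y' : Equiv.Perm (ZMod N)) (Rx Rx' Ry Ry' : GridRect N),
      IsVertDecomp c x x' Rx Rx' → IsVertDecomp c y y' Ry Ry' →
      s x Rx * s x' Rx' = s y Ry * s y' Ry') ∧
    (∀ (r : ZMod N) (x x' y y' : Equiv.Perm (ZMod N)) (Rx Rx' Ry Ry' : GridRect N),
      IsHorizDecomp r x x' Rx Rx' → IsHorizDecomp r y y' Ry Ry' →
      s x Rx * s x' Rx' = s y Ry * s y' Ry') := by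
  refine ⟨fun c x => vert_exu hN c x, fun r x => ?_,
    fun c x x' y y' Rx Rx' Ry Ry' h1 h2 => vert_products hs hN h1 h2,
    fun r x x' y y' Rx Rx' Ry Ry' h1 h2 => ?_⟩
  · refine ⟨((partner r x⁻¹)⁻¹, GridRect.T (vR hN r x⁻¹), GridRect.T (vR' hN r x⁻¹)),
      ?_, ?_⟩
    · have h := vert_to_horiz (isVertDecomp_canonical hN r x⁻¹)
      rwa [inv_inv] at h
    · rintro ⟨x₁, R, R'⟩ hd
      have hv := horiz_to_vert hd
      obtain ⟨e1, e2, e3⟩ := vertDecomp_unique hN hv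
      have f1 : x₁ = (partner r x⁻¹)⁻¹ := by rw [← e1, inv_inv]
      have f2 : R = GridRect.T (vR hN r x⁻¹) := by rw [← e2, T_T]
      have f3 : R' = GridRect.T (vR' hN r x⁻¹) := by rw [← e3, T_T]
      rw [f1, f2, f3]
  · have h1' := horiz_to_vert h1
    have h2' := horiz_to_vert h2
    have h := vert_products (sign_T hs) hN h1' h2'
    simpa using h

end Scratch5

/-- For `N ≥ 2`, every vertical annulus `V c` and every horizontal annulus
`H r` decomposes uniquely as a sum of two rectangles based at any generator
`x`, and for a sign assignment `s` the resulting products of signs — the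
vertical function `v_{s,x}(c)` and the horizontal function `h_{s,x}(r)` — do
not depend on the generator at which the annulus is based. -/
theorem annulus_sign_independent_of_generator {N : ℕ} [NeZero N] (hN : 2 ≤ N)
    (s : Equiv.Perm (ZMod N) → GridRect N → ℤ) (hs : IsSignAssignment s) :
    (∀ (c : ZMod N) (x : Equiv.Perm (ZMod N)),
      ∃! d : Equiv.Perm (ZMod N) × GridRect N × GridRect N,
        IsVertDecomp c x d.1 d.2.1 d.2.2) ∧
    (∀ (r : ZMod N) (x : Equiv.Perm (ZMod N)),
      ∃! d : Equiv.Perm (ZMod N) × GridRect N × GridRect N,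
        IsHorizDecomp r x d.1 d.2.1 d.2.2) ∧
    (∀ (c : ZMod N) (x x' y y' : Equiv.Perm (ZMod N)) (Rx Rx' Ry Ry' : GridRect N),
      IsVertDecomp c x x' Rx Rx' → IsVertDecomp c y y' Ry Ry' →
      s x Rx * s x' Rx' = s y Ry * s y' Ry') ∧
    (∀ (r : ZMod N) (x x' y y' : Equiv.Perm (ZMod N)) (Rx Rx' Ry Ry' : GridRect N),
      IsHorizDecomp r x x' Rx Rx' → IsHorizDecomp r y y' Ry Ry' →
      s x Rx * s x' Rx' = s y Ry * s y' Ry') :=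
  Scratch5.main hN s hs
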